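/- Let u(t,x) = erfc(−x/√(2σ²t)) / ( erfc(−x/√(2σ²t)) + exp((t − 2x)/(2σ²))·(2 − erfc((t − x)/√(2σ²t))) ) for t > 0, x ∈ ℝ, σ > 0. Then V(t,x) = 1 − u(t,x) satisfies the viscous Burgers equation ∂V/∂t = (σ²/2)∂²V/∂x² − V·∂V/∂x on (0,∞) × ℝ. -/

import Mathlib

open Real MeasureTheory

/-- The complementary error function. -/
noncomputable def erfc (z : ℝ) : ℝ :=
  (2 / Real.sqrt π) * ∫ s in Set.Ioi z, Real.exp (-s ^ 2)

lemma integrable_gauss : Integrable (fun s : ℝ => Real.exp (-s ^ 2)) := by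
  simpa using integrable_exp_neg_mul_sq (by norm_num : (0:ℝ) < 1)

lemma erfc_eq (z : ℝ) :
    erfc z = (2 / Real.sqrt π) * ((∫ s : ℝ, Real.exp (-s ^ 2))
      - ∫ s in Set.Iic 0, Real.exp (-s ^ 2)) -
      (2 / Real.sqrt π) * ∫ s in (0:ℝ)..z, Real.exp (-s ^ 2) := by
  have h1 := intervalIntegral.integral_Iic_sub_Iic
    (integrable_gauss.integrableOn (s := Set.Iic 0))
    (integrable_gauss.integrableOn (s := Set.Iic z)) (μ := volume)
  have h2 := intervalIntegral.integral_Iic_add_Ioi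
    (b := z) (integrable_gauss.integrableOn) (integrable_gauss.integrableOn)
    (μ := volume) (f := fun s : ℝ => Real.exp (-s ^ 2))
  unfold erfc
  rw [← mul_sub]
  congr 1
  linarith [h1, h2]

lemma hasDerivAt_erfc (z : ℝ) :
    HasDerivAt erfc (-(2 / Real.sqrt π * Real.exp (-z ^ 2))) z := by
  have h : HasDerivAt (fun u => ∫ s in (0:ℝ)..u, Real.exp (-s ^ 2))
      (Real.exp (-z ^ 2)) z :=
    intervalIntegral.integral_hasDerivAt_right
      (integrable_gauss.intervalIntegrable)
      ((Continuous.stronglyMeasurableAtFilter (by fun_prop) _ _))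
      (by fun_prop)
  have := ((h.const_mul (2 / Real.sqrt π)).const_sub
    ((2 / Real.sqrt π) * ((∫ s : ℝ, Real.exp (-s ^ 2))
      - ∫ s in Set.Iic 0, Real.exp (-s ^ 2))))
  refine HasDerivAt.congr_deriv (this.congr_of_eventuallyEq ?_) (by ring)
  filter_upwards with u using erfc_eq u

lemma erfc_pos (z : ℝ) : 0 < erfc z := by
  have h0 : (0:ℝ) < 2 / Real.sqrt π := by positivity
  refine mul_pos h0 ?_
  refine (setIntegral_pos_iff_support_of_nonneg_ae ?_ ?_).2 ?_
  · filter_upwards with s using (Real.exp_pos _).le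
  · exact integrable_gauss.integrableOn
  · have : (Function.support fun s : ℝ => Real.exp (-s ^ 2)) = Set.univ := by
      ext s; simp [Function.support, (Real.exp_pos (-s ^ 2)).ne']
    rw [this, Set.univ_inter]
    simp [Real.volume_Ioi]

lemma erfc_lt_two (z : ℝ) : erfc z < 2 := by
  have hpi : (0:ℝ) < Real.sqrt π := Real.sqrt_pos.2 Real.pi_pos
  have htot : (∫ s : ℝ, Real.exp (-s ^ 2)) = Real.sqrt π := by
    simpa using integral_gaussian 1
  have hsplit := intervalIntegral.integral_Iic_add_Ioi (b := z)
    (integrable_gauss.integrableOn) (integrable_gauss.integrableOn)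
    (μ := volume) (f := fun s : ℝ => Real.exp (-s ^ 2))
  have hIic : 0 < ∫ s in Set.Iic z, Real.exp (-s ^ 2) := by
    refine (setIntegral_pos_iff_support_of_nonneg_ae ?_ ?_).2 ?_
    · filter_upwards with s using (Real.exp_pos _).le
    · exact integrable_gauss.integrableOn
    · have : (Function.support fun s : ℝ => Real.exp (-s ^ 2)) = Set.univ := by
        ext s; simp [Function.support, (Real.exp_pos (-s ^ 2)).ne']
      rw [this, Set.univ_inter]
      simp [Real.volume_Iic]
  have hIoi : (∫ s in Set.Ioi z, Real.exp (-s ^ 2)) < Real.sqrt π := by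
    rw [← htot, ← hsplit]; linarith
  unfold erfc
  calc 2 / Real.sqrt π * ∫ s in Set.Ioi z, Real.exp (-s ^ 2)
      < 2 / Real.sqrt π * Real.sqrt π := by
        exact mul_lt_mul_of_pos_left hIoi (by positivity)
    _ = 2 := by field_simp


noncomputable def Nf (σ t x : ℝ) : ℝ := erfc (-x / Real.sqrt (2 * σ ^ 2 * t))

noncomputable def Mf (σ t x : ℝ) : ℝ :=
  Real.exp ((t - 2 * x) / (2 * σ ^ 2)) * (2 - erfc ((t - x) / Real.sqrt (2 * σ ^ 2 * t)))

noncomputable def Kf (σ t x : ℝ) : ℝ :=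
  2 / Real.sqrt π * Real.exp (-(x / Real.sqrt (2 * σ ^ 2 * t)) ^ 2) / Real.sqrt (2 * σ ^ 2 * t)

lemma Pf_pos (σ t x : ℝ) : 0 < Nf σ t x + Mf σ t x :=
  add_pos (erfc_pos _) (mul_pos (Real.exp_pos _)
    (by linarith [erfc_lt_two ((t - x) / Real.sqrt (2 * σ ^ 2 * t))]))

lemma key_exp (σ t x : ℝ) (hσ : 0 < σ) (ht : 0 < t) :
    Real.exp ((t - 2 * x) / (2 * σ ^ 2)) *
      Real.exp (-((t - x) / Real.sqrt (2 * σ ^ 2 * t)) ^ 2) =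
      Real.exp (-(x / Real.sqrt (2 * σ ^ 2 * t)) ^ 2) := by
  rw [← Real.exp_add]
  congr 1
  have hcc : (Real.sqrt (2 * σ ^ 2 * t)) ^ 2 = 2 * σ ^ 2 * t :=
    Real.sq_sqrt (by positivity)
  rw [div_pow, div_pow, hcc]
  have hσ' : σ ≠ 0 := hσ.ne'
  have ht' : t ≠ 0 := ht.ne'
  field_simp
  ring

lemma hasDerivAt_N_x (σ t x : ℝ) (hσ : 0 < σ) (ht : 0 < t) :
    HasDerivAt (fun ξ => Nf σ t ξ) (Kf σ t x) x := by
  have hinner : HasDerivAt (fun ξ : ℝ => -ξ / Real.sqrt (2 * σ ^ 2 * t))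
      (-1 / Real.sqrt (2 * σ ^ 2 * t)) x := (hasDerivAt_id x).neg.div_const _
  have h := (hasDerivAt_erfc (-x / Real.sqrt (2 * σ ^ 2 * t))).comp x hinner
  exact h.congr_deriv (by
    have e : (-x / Real.sqrt (2 * σ ^ 2 * t)) ^ 2 = (x / Real.sqrt (2 * σ ^ 2 * t)) ^ 2 := by
      ring
    rw [e]
    unfold Kf
    ring)

lemma hasDerivAt_M_x (σ t x : ℝ) (hσ : 0 < σ) (ht : 0 < t) :
    HasDerivAt (fun ξ => Mf σ t ξ) (-(Mf σ t x) / σ ^ 2 - Kf σ t x) x := by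
  have hE : HasDerivAt (fun ξ : ℝ => Real.exp ((t - 2 * ξ) / (2 * σ ^ 2)))
      (Real.exp ((t - 2 * x) / (2 * σ ^ 2)) * ((0 - 2 * 1) / (2 * σ ^ 2))) x :=
    (((hasDerivAt_const x t).sub ((hasDerivAt_id x).const_mul 2)).div_const (2 * σ ^ 2)).exp
  have hinner : HasDerivAt (fun ξ : ℝ => (t - ξ) / Real.sqrt (2 * σ ^ 2 * t))
      ((0 - 1) / Real.sqrt (2 * σ ^ 2 * t)) x :=
    ((hasDerivAt_const x t).sub (hasDerivAt_id x)).div_const _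
  have hW : HasDerivAt (fun ξ : ℝ => 2 - erfc ((t - ξ) / Real.sqrt (2 * σ ^ 2 * t)))
      (-(-(2 / Real.sqrt π * Real.exp (-((t - x) / Real.sqrt (2 * σ ^ 2 * t)) ^ 2)) *
        ((0 - 1) / Real.sqrt (2 * σ ^ 2 * t)))) x :=
    by have := ((hasDerivAt_erfc ((t - x) / Real.sqrt (2 * σ ^ 2 * t))).comp x hinner).const_sub 2; exact this
  refine HasDerivAt.congr_deriv (hE.mul hW) ?_
  unfold Mf Kf
  linear_combination (-(2 / Real.sqrt π) / Real.sqrt (2 * σ ^ 2 * t)) * key_exp σ t x hσ ht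

lemma hasDerivAt_K_x (σ t x : ℝ) (hσ : 0 < σ) (ht : 0 < t) :
    HasDerivAt (fun ξ => Kf σ t ξ) (-(x / (σ ^ 2 * t)) * Kf σ t x) x := by
  have h2 : (0:ℝ) < 2 * σ ^ 2 * t := by positivity
  have hinner : HasDerivAt (fun ξ : ℝ => -(ξ / Real.sqrt (2 * σ ^ 2 * t)) ^ 2)
      (-((2:ℕ) * (x / Real.sqrt (2 * σ ^ 2 * t)) ^ (2 - 1) *
        (1 / Real.sqrt (2 * σ ^ 2 * t)))) x :=
    (((hasDerivAt_id x).div_const _).pow 2).neg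
  have h := ((hinner.exp.const_mul (2 / Real.sqrt π)).div_const (Real.sqrt (2 * σ ^ 2 * t)))
  exact h.congr_deriv (by
    have hst : σ ^ 2 * t = Real.sqrt (2 * σ ^ 2 * t) ^ 2 / 2 := by
      rw [Real.sq_sqrt h2.le]; ring
    rw [hst]
    unfold Kf
    have hc0 : Real.sqrt (2 * σ ^ 2 * t) ≠ 0 := (Real.sqrt_pos.2 h2).ne'
    field_simp
    norm_num
    field_simp)

lemma hasDerivAt_N_t (σ t x : ℝ) (hσ : 0 < σ) (ht : 0 < t) :
    HasDerivAt (fun τ => Nf σ τ x) (-(x / (2 * t)) * Kf σ t x) t := by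
  have h2 : (0:ℝ) < 2 * σ ^ 2 * t := by positivity
  have hc0 : (0:ℝ) < Real.sqrt (2 * σ ^ 2 * t) := Real.sqrt_pos.2 h2
  have hlin : HasDerivAt (fun τ : ℝ => 2 * σ ^ 2 * τ) (2 * σ ^ 2 * 1) t :=
    (hasDerivAt_id t).const_mul (2 * σ ^ 2)
  have hs : HasDerivAt (fun τ : ℝ => Real.sqrt (2 * σ ^ 2 * τ))
      (2 * σ ^ 2 * 1 / (2 * Real.sqrt (2 * σ ^ 2 * t))) t := hlin.sqrt h2.ne'
  have hq : HasDerivAt (fun τ : ℝ => -x / Real.sqrt (2 * σ ^ 2 * τ))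
      ((0 * Real.sqrt (2 * σ ^ 2 * t) -
        -x * (2 * σ ^ 2 * 1 / (2 * Real.sqrt (2 * σ ^ 2 * t)))) /
        Real.sqrt (2 * σ ^ 2 * t) ^ 2) t :=
    (hasDerivAt_const t (-x)).div hs hc0.ne'
  have h := (hasDerivAt_erfc (-x / Real.sqrt (2 * σ ^ 2 * t))).comp t hq
  exact h.congr_deriv (by
    have e : (-x / Real.sqrt (2 * σ ^ 2 * t)) ^ 2 = (x / Real.sqrt (2 * σ ^ 2 * t)) ^ 2 := by
      ring
    rw [e]
    set c := Real.sqrt (2 * σ ^ 2 * t) with hc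
    have hcc : c ^ 2 = 2 * σ ^ 2 * t := Real.sq_sqrt h2.le
    have hs2 : σ ^ 2 = c ^ 2 / (2 * t) := by
      rw [hcc]; field_simp
    unfold Kf
    rw [← hc, hs2]
    have hcne : c ≠ 0 := hc0.ne'
    have htne : t ≠ 0 := ht.ne'
    field_simp
    ring)

lemma hasDerivAt_M_t (σ t x : ℝ) (hσ : 0 < σ) (ht : 0 < t) :
    HasDerivAt (fun τ => Mf σ τ x)
      (Mf σ t x / (2 * σ ^ 2) + Kf σ t x - (t - x) / (2 * t) * Kf σ t x) t := by
  have h2 : (0:ℝ) < 2 * σ ^ 2 * t := by positivity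
  have hc0 : (0:ℝ) < Real.sqrt (2 * σ ^ 2 * t) := Real.sqrt_pos.2 h2
  have hE : HasDerivAt (fun τ : ℝ => Real.exp ((τ - 2 * x) / (2 * σ ^ 2)))
      (Real.exp ((t - 2 * x) / (2 * σ ^ 2)) * (1 / (2 * σ ^ 2))) t :=
    (((hasDerivAt_id t).sub_const (2 * x)).div_const (2 * σ ^ 2)).exp
  have hlin : HasDerivAt (fun τ : ℝ => 2 * σ ^ 2 * τ) (2 * σ ^ 2 * 1) t :=
    (hasDerivAt_id t).const_mul (2 * σ ^ 2)
  have hs : HasDerivAt (fun τ : ℝ => Real.sqrt (2 * σ ^ 2 * τ))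
      (2 * σ ^ 2 * 1 / (2 * Real.sqrt (2 * σ ^ 2 * t))) t := hlin.sqrt h2.ne'
  have hq : HasDerivAt (fun τ : ℝ => (τ - x) / Real.sqrt (2 * σ ^ 2 * τ))
      ((1 * Real.sqrt (2 * σ ^ 2 * t) -
        (t - x) * (2 * σ ^ 2 * 1 / (2 * Real.sqrt (2 * σ ^ 2 * t)))) /
        Real.sqrt (2 * σ ^ 2 * t) ^ 2) t :=
    ((hasDerivAt_id t).sub_const x).div hs hc0.ne'
  have hW : HasDerivAt (fun τ : ℝ => 2 - erfc ((τ - x) / Real.sqrt (2 * σ ^ 2 * τ)))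
      (-(-(2 / Real.sqrt π * Real.exp (-((t - x) / Real.sqrt (2 * σ ^ 2 * t)) ^ 2)) *
        ((1 * Real.sqrt (2 * σ ^ 2 * t) -
          (t - x) * (2 * σ ^ 2 * 1 / (2 * Real.sqrt (2 * σ ^ 2 * t)))) /
          Real.sqrt (2 * σ ^ 2 * t) ^ 2))) t :=
    by have := ((hasDerivAt_erfc ((t - x) / Real.sqrt (2 * σ ^ 2 * t))).comp t hq).const_sub 2; exact this
  refine HasDerivAt.congr_deriv (hE.mul hW) ?_
  have key := key_exp σ t x hσ ht
  set c := Real.sqrt (2 * σ ^ 2 * t) with hc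
  have hcc : c ^ 2 = 2 * σ ^ 2 * t := Real.sq_sqrt h2.le
  have hs2 : σ ^ 2 = c ^ 2 / (2 * t) := by
    rw [hcc]; field_simp
  unfold Mf Kf
  rw [← hc]
  rw [hs2] at key ⊢
  have hcne : c ≠ 0 := hc0.ne'
  have htne : t ≠ 0 := ht.ne'
  have hπ : Real.sqrt π ≠ 0 := (Real.sqrt_pos.2 Real.pi_pos).ne'
  linear_combination (norm := (field_simp; ring))
    ((1 - (t - x) / (2 * t)) * (2 / Real.sqrt π) / c) * key

noncomputable def Ux (σ t x : ℝ) : ℝ :=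
  (Kf σ t x * (Nf σ t x + Mf σ t x) + Nf σ t x * Mf σ t x / σ ^ 2) /
    (Nf σ t x + Mf σ t x) ^ 2

noncomputable def UxD (σ t x : ℝ) : ℝ :=
  (((-(x / (σ ^ 2 * t)) * Kf σ t x) * (Nf σ t x + Mf σ t x) +
      Kf σ t x * (-(Mf σ t x) / σ ^ 2) +
      (Kf σ t x * Mf σ t x + Nf σ t x * (-(Mf σ t x) / σ ^ 2 - Kf σ t x)) / σ ^ 2) *
      ((Nf σ t x + Mf σ t x) ^ 2) -
    (Kf σ t x * (Nf σ t x + Mf σ t x) + Nf σ t x * Mf σ t x / σ ^ 2) *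
      (2 * (Nf σ t x + Mf σ t x) * (-(Mf σ t x) / σ ^ 2))) /
    ((Nf σ t x + Mf σ t x) ^ 2) ^ 2

lemma hasDerivAt_u_x (σ t x : ℝ) (hσ : 0 < σ) (ht : 0 < t) :
    HasDerivAt (fun ξ => Nf σ t ξ / (Nf σ t ξ + Mf σ t ξ)) (Ux σ t x) x := by
  have hN := hasDerivAt_N_x σ t x hσ ht
  have hM := hasDerivAt_M_x σ t x hσ ht
  have h := hN.div (hN.add hM) (Pf_pos σ t x).ne'
  refine HasDerivAt.congr_deriv h ?_
  unfold Ux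
  simp only [Pi.add_apply]
  have hne : Nf σ t x + Mf σ t x ≠ 0 := (Pf_pos σ t x).ne'
  have hσ' : σ ≠ 0 := hσ.ne'
  field_simp
  ring

lemma hasDerivAt_Ux (σ t x : ℝ) (hσ : 0 < σ) (ht : 0 < t) :
    HasDerivAt (fun ξ => Ux σ t ξ) (UxD σ t x) x := by
  have hN := hasDerivAt_N_x σ t x hσ ht
  have hM := hasDerivAt_M_x σ t x hσ ht
  have hK := hasDerivAt_K_x σ t x hσ ht
  have hP := hN.add hM
  have hq := (hK.mul hP).add ((hN.mul hM).div_const (σ ^ 2))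
  have hden := hP.pow 2
  have hdne : (Nf σ t x + Mf σ t x) ^ 2 ≠ 0 := pow_ne_zero 2 (Pf_pos σ t x).ne'
  have h := hq.div hden hdne
  unfold Ux UxD
  refine HasDerivAt.congr_deriv h ?_
  simp only [Pi.add_apply, Pi.mul_apply, Pi.pow_apply, Nat.reduceSub, pow_one]
  push_cast
  ring

/-- The explicit formula `V = 1 - u` built from `erfc` solves the viscous
Burgers equation `∂V/∂t = (σ²/2) ∂²V/∂x² - V ∂V/∂x` on `(0,∞) × ℝ`. -/
theorem burgers_exact_solution (σ : ℝ) (hσ : 0 < σ) :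
    let u : ℝ → ℝ → ℝ := fun t x =>
      erfc (-x / Real.sqrt (2 * σ ^ 2 * t)) /
        (erfc (-x / Real.sqrt (2 * σ ^ 2 * t)) +
          Real.exp ((t - 2 * x) / (2 * σ ^ 2)) *
            (2 - erfc ((t - x) / Real.sqrt (2 * σ ^ 2 * t))))
    let V : ℝ → ℝ → ℝ := fun t x => 1 - u t x
    ∀ t x : ℝ, 0 < t →
      deriv (fun τ => V τ x) t =
        σ ^ 2 / 2 * deriv (deriv (fun ξ => V t ξ)) x -
          V t x * deriv (fun ξ => V t ξ) x := by
  intro u V t x ht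
  show deriv (fun τ => 1 - Nf σ τ x / (Nf σ τ x + Mf σ τ x)) t =
    σ ^ 2 / 2 * deriv (deriv (fun ξ => 1 - Nf σ t ξ / (Nf σ t ξ + Mf σ t ξ))) x -
      (1 - Nf σ t x / (Nf σ t x + Mf σ t x)) *
        deriv (fun ξ => 1 - Nf σ t ξ / (Nf σ t ξ + Mf σ t ξ)) x
  have hφ : (Nf σ t x + Mf σ t x) ≠ 0 := (Pf_pos σ t x).ne'
  have hNt := hasDerivAt_N_t σ t x hσ ht
  have hMt := hasDerivAt_M_t σ t x hσ ht
  have hut : HasDerivAt (fun τ => 1 - Nf σ τ x / (Nf σ τ x + Mf σ τ x))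
      (-((-(x / (2 * t)) * Kf σ t x * (Nf σ t x + Mf σ t x) -
        Nf σ t x * (-(x / (2 * t)) * Kf σ t x +
          (Mf σ t x / (2 * σ ^ 2) + Kf σ t x - (t - x) / (2 * t) * Kf σ t x))) /
        (Nf σ t x + Mf σ t x) ^ 2)) t :=
    ((hNt.div (hNt.add hMt) hφ).const_sub 1).congr_deriv (by simp only [Pi.add_apply])
  have hVx_fun : deriv (fun ξ => 1 - Nf σ t ξ / (Nf σ t ξ + Mf σ t ξ)) =
      fun ξ => -(Ux σ t ξ) :=
    funext fun ξ => (((hasDerivAt_u_x σ t ξ hσ ht).const_sub 1)).deriv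
  have hUxD : deriv (fun ξ => -(Ux σ t ξ)) x = -(UxD σ t x) := ((hasDerivAt_Ux σ t x hσ ht).neg).deriv
  rw [hut.deriv, hVx_fun]
  simp only
  rw [hUxD]
  unfold Ux UxD
  field_simp
  ring
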